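/- Let Q be a finite τ-structure with universe V and free set F ⊆ V such that color(Q) is a core, let B be a finite structure over τ ∪ {r_X : X ∈ V}, and let 𝔇 be the τ-structure with universe D = {(X,b) ∈ V × B : b ∈ r_X^B} and relations r^𝔇 = {((X₁,b₁),…,(X_ρ,b_ρ)) ∈ D^ρ : (X₁,…,X_ρ) ∈ r^Q and (b₁,…,b_ρ) ∈ r^B}, with first projection π₁ : D → V. Let N = {h : F → D : π₁ ∘ h = id_F and h extends to a τ-homomorphism Q → 𝔇}, let N' = {h : F → D : (π₁ ∘ h)(F) = F and h extends to a τ-homomorphism Q → 𝔇}, and let I = {g : F → F : g extends to an automorphism of Q}. Then N' = {f ∘ g : f ∈ N, g ∈ I}. -/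

import Mathlib

/-- A relational structure over vocabulary `σ` with arities `ar`, on universe `V`. -/
structure RelStr (σ : Type) (ar : σ → ℕ) (V : Type) where
  rel : ∀ r : σ, Set ((Fin (ar r)) → V)

/-- `f` is a homomorphism from `Q₁` to `Q₂`. -/
def IsHom {σ : Type} {ar : σ → ℕ} {A B : Type}
    (Q₁ : RelStr σ ar A) (Q₂ : RelStr σ ar B) (f : A → B) : Prop :=
  ∀ r t, t ∈ Q₁.rel r → (f ∘ t) ∈ Q₂.rel r

/-- `Q` (whose universe is the whole type `V`) is a core: there is no homomorphism
from `Q` to a proper substructure `(U, S)` of `Q`. -/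
def IsCore {σ : Type} {ar : σ → ℕ} {V : Type} (Q : RelStr σ ar V) : Prop :=
  ¬ ∃ (U : Set V) (S : RelStr σ ar V) (f : V → V),
      (∀ r, S.rel r ⊆ Q.rel r) ∧
      (∀ r t, t ∈ S.rel r → ∀ i, t i ∈ U) ∧
      (U ≠ Set.univ ∨ S ≠ Q) ∧
      (∀ a, f a ∈ U) ∧ IsHom Q S f

/-- Arities for the colored vocabulary `σ ⊕ F` (fresh unary symbols for `F`). -/
abbrev colorAr {σ : Type} (ar : σ → ℕ) {V : Type} (F : Set V) : σ ⊕ ↥F → ℕ :=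
  Sum.elim ar fun _ => 1

/-- The coloring of `Q` with respect to the free set `F`. -/
def color {σ : Type} {ar : σ → ℕ} {V : Type} (Q : RelStr σ ar V) (F : Set V) :
    RelStr (σ ⊕ ↥F) (colorAr ar F) V where
  rel := fun r =>
    match r with
    | Sum.inl s => Q.rel s
    | Sum.inr x => {t | ∀ i, t i = (x : V)}

/-- Arities for the vocabulary `σ ⊕ V` with a fresh unary symbol `r_X` for every `X ∈ V`. -/
abbrev fullAr {σ : Type} (ar : σ → ℕ) (V : Type) : σ ⊕ V → ℕ :=
  Sum.elim ar fun _ => 1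

section Setup

variable {σ : Type} {ar : σ → ℕ} {V B : Type}

/-- The domain `D = {(X, b) ∈ V × B : b ∈ r_X^B}`. -/
def Dset (Bst : RelStr (σ ⊕ V) (fullAr ar V) B) : Set (V × B) :=
  {p | (fun _ : Fin 1 => p.2) ∈ Bst.rel (Sum.inr p.1)}

/-- The τ-structure `𝔇` over `D ⊆ V × B` with
`r^𝔇 = {((X₁,b₁),…) ∈ D^ρ : (X₁,…) ∈ r^Q and (b₁,…) ∈ r^B}`. -/
def bigD (Q : RelStr σ ar V) (Bst : RelStr (σ ⊕ V) (fullAr ar V) B) :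
    RelStr σ ar (V × B) where
  rel := fun r => {t | (∀ i, t i ∈ Dset Bst) ∧
    (fun i => (t i).1) ∈ Q.rel r ∧ (fun i => (t i).2) ∈ Bst.rel (Sum.inl r)}

/-- The τ-reduct of `B`. -/
def tauReduct (Bst : RelStr (σ ⊕ V) (fullAr ar V) B) : RelStr σ ar B where
  rel := fun r => Bst.rel (Sum.inl r)

/-- `fullcolor(Q)(B)`: the restrictions to `F` of τ-homomorphisms `hh : Q → B`
satisfying `hh(X) ∈ r_X^B` for every variable `X ∈ V`. -/
def FCset (Q : RelStr σ ar V) (F : Set V)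
    (Bst : RelStr (σ ⊕ V) (fullAr ar V) B) : Set (↥F → B) :=
  {g | ∃ hh : V → B, IsHom Q (tauReduct Bst) hh ∧
    (∀ X : V, (fun _ : Fin 1 => hh X) ∈ Bst.rel (Sum.inr X)) ∧
    ∀ x : ↥F, g x = hh x}

/-- `N`: the functions `h : F → D` with `π₁ ∘ h = id_F` which extend to a
τ-homomorphism from `Q` to `𝔇`. -/
def Nset (Q : RelStr σ ar V) (F : Set V)
    (Bst : RelStr (σ ⊕ V) (fullAr ar V) B) : Set (↥F → V × B) :=
  {h | (∀ x : ↥F, h x ∈ Dset Bst) ∧ (∀ x : ↥F, (h x).1 = (x : V)) ∧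
    ∃ h' : V → V × B, (∀ v, h' v ∈ Dset Bst) ∧ IsHom Q (bigD Q Bst) h' ∧
      ∀ x : ↥F, h' (x : V) = h x}

end Setup

/-- `g' : V → V` is an automorphism of `Q`: a bijective homomorphism whose inverse
is also a homomorphism. -/
def IsAut {σ : Type} {ar : σ → ℕ} {V : Type} (Q : RelStr σ ar V) (g' : V → V) : Prop :=
  Function.Bijective g' ∧ IsHom Q Q g' ∧
    ∃ g'' : V → V, (∀ x, g'' (g' x) = x) ∧ (∀ x, g' (g'' x) = x) ∧ IsHom Q Q g''

/-- `I`: the maps `g : F → F` extending to an automorphism of `Q`. -/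
def Iset {σ : Type} {ar : σ → ℕ} {V : Type} (Q : RelStr σ ar V) (F : Set V) :
    Set (↥F → ↥F) :=
  {g | ∃ g' : V → V, IsAut Q g' ∧ ∀ x : ↥F, g' (x : V) = (g x : V)}

/-- `N'`: the functions `h : F → D` with `(π₁ ∘ h)(F) = F` which extend to a
τ-homomorphism from `Q` to `𝔇`. -/
def N'set {σ : Type} {ar : σ → ℕ} {V B : Type} (Q : RelStr σ ar V) (F : Set V)
    (Bst : RelStr (σ ⊕ V) (fullAr ar V) B) : Set (↥F → V × B) :=
  {h | (∀ x : ↥F, h x ∈ Dset Bst) ∧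
    (Set.range fun x : ↥F => (h x).1) = F ∧
    ∃ h' : V → V × B, (∀ v, h' v ∈ Dset Bst) ∧ IsHom Q (bigD Q Bst) h' ∧
      ∀ x : ↥F, h' (x : V) = h x}

lemma isHom_comp {σ : Type} {ar : σ → ℕ} {A B C : Type} {Q₁ : RelStr σ ar A}
    {Q₂ : RelStr σ ar B} {Q₃ : RelStr σ ar C} {f : A → B} {g : B → C}
    (hf : IsHom Q₁ Q₂ f) (hg : IsHom Q₂ Q₃ g) : IsHom Q₁ Q₃ (g ∘ f) := by
  intro r t ht
  have := hg r (f ∘ t) (hf r t ht)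
  simpa [Function.comp_assoc] using this

lemma isHom_iterate {σ : Type} {ar : σ → ℕ} {V : Type} {Q : RelStr σ ar V} {p : V → V}
    (hp : IsHom Q Q p) : ∀ n, IsHom Q Q (p^[n]) := by
  intro n
  induction n with
  | zero => intro r t ht; simpa using ht
  | succ n ih =>
    rw [Function.iterate_succ]
    exact isHom_comp hp ih

lemma exists_iterate_id {V : Type} [Finite V] {p : V → V} (hp : Function.Bijective p) :
    ∃ n, 0 < n ∧ p^[n] = id := by
  classical
  let e : Equiv.Perm V := Equiv.ofBijective p hp
  refine ⟨orderOf e, orderOf_pos e, ?_⟩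
  funext x
  have h1 : (e ^ orderOf e) x = x := by rw [pow_orderOf_eq_one]; rfl
  have h2 : (e ^ orderOf e) x = (⇑e)^[orderOf e] x := by
    rw [← Equiv.Perm.iterate_eq_pow]
  have he : ⇑e = p := rfl
  rw [he] at h2
  simp [← h2, h1]

/-- A homomorphism of `color Q F` (i.e. an endomorphism of `Q` fixing `F`
pointwise) is surjective, when `color Q F` is a core. -/
lemma core_surj {σ : Type} {ar : σ → ℕ} {V : Type} {Q : RelStr σ ar V} {F : Set V}
    (hcore : IsCore (color Q F)) {q : V → V} (hq : IsHom Q Q q)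
    (hfix : ∀ x : ↥F, q (x : V) = (x : V)) : Function.Surjective q := by
  by_contra hns
  apply hcore
  refine ⟨Set.range q,
    ⟨fun r => {t | ∃ t' ∈ (color Q F).rel r, t = q ∘ t'}⟩, q, ?_, ?_, ?_, ?_, ?_⟩
  · rintro r t ⟨t', ht', rfl⟩
    match r with
    | Sum.inl s => exact hq s t' ht'
    | Sum.inr x =>
      intro i
      simp only [Function.comp_apply, color] at ht' ⊢
      rw [ht' i, hfix x]
  · rintro r t ⟨t', _, rfl⟩ i
    exact ⟨t' i, rfl⟩
  · left
    intro hU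
    apply hns
    intro y
    have : y ∈ Set.range q := hU ▸ Set.mem_univ y
    exact this
  · intro a; exact ⟨a, rfl⟩
  · intro r t ht
    exact ⟨t, ht, rfl⟩

/-- If `color(Q)` is a core, then `N' = {f ∘ g : f ∈ N, g ∈ I}`. -/
theorem stmt7 {σ : Type} {ar : σ → ℕ} {V B : Type} [Fintype σ] [Fintype V] [Fintype B]
    (Q : RelStr σ ar V) (F : Set V) (hcore : IsCore (color Q F))
    (Bst : RelStr (σ ⊕ V) (fullAr ar V) B) :
    N'set Q F Bst =
      {h : ↥F → V × B | ∃ f ∈ Nset Q F Bst, ∃ g ∈ Iset Q F, h = f ∘ g} := by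
  ext h
  constructor
  · rintro ⟨hD, hrange, h', hD', hhom', hext⟩
    -- p : the first-coordinate endomorphism of Q
    set p : V → V := fun v => (h' v).1 with hp_def
    have hphom : IsHom Q Q p := by
      intro r t ht
      exact (hhom' r t ht).2.1
    have hpF : ∀ x : ↥F, p (x : V) = (h x).1 := fun x => by
      simp [hp_def, hext x]
    have hpmem : ∀ x : ↥F, p (x : V) ∈ F := by
      intro x
      rw [hpF x, ← hrange]
      exact ⟨x, rfl⟩
    -- the induced map on F
    set pF : ↥F → ↥F := fun x => ⟨p (x : V), hpmem x⟩ with hpF_def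
    have hpFsurj : Function.Surjective pF := by
      intro y
      have hy : (y : V) ∈ Set.range fun x : ↥F => (h x).1 := by rw [hrange]; exact y.2
      obtain ⟨x, hx⟩ := hy
      refine ⟨x, Subtype.ext ?_⟩
      show p (x : V) = (y : V)
      rw [hpF x]; exact hx
    have hpFbij : Function.Bijective pF := Finite.surjective_iff_bijective.mp hpFsurj
    -- the iterates of p preserve F
    have hiter : ∀ (k : ℕ) (x : ↥F), p^[k] (x : V) = ((pF^[k] x : ↥F) : V) := by
      intro k
      induction k with
      | zero => intro x; rfl
      | succ k ih =>
        intro x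
        rw [Function.iterate_succ', Function.iterate_succ']
        simp only [Function.comp_apply, ih x]
        rfl
    obtain ⟨d, hd0, hdid⟩ := exists_iterate_id hpFbij
    -- q = p^[d] fixes F pointwise
    have hqfix : ∀ x : ↥F, p^[d] (x : V) = (x : V) := by
      intro x
      rw [hiter d x, hdid]; rfl
    have hqsurj : Function.Surjective (p^[d]) :=
      core_surj hcore (isHom_iterate hphom d) hqfix
    have hqbij : Function.Bijective (p^[d]) := Finite.surjective_iff_bijective.mp hqsurj
    have hpinj : Function.Injective p := by
      intro a b hab
      apply hqbij.1
      obtain ⟨d', rfl⟩ := Nat.exists_eq_succ_of_ne_zero hd0.ne'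
      rw [Function.iterate_succ]
      simp [hab]
    have hpbij : Function.Bijective p := Finite.injective_iff_bijective.mp hpinj
    obtain ⟨m, hm0, hmid⟩ := exists_iterate_id hpbij
    obtain ⟨m', rfl⟩ := Nat.exists_eq_succ_of_ne_zero hm0.ne'
    set pinv : V → V := p^[m'] with hpinv_def
    have hleft : ∀ v, pinv (p v) = v := by
      intro v
      have : p^[m' + 1] v = v := by rw [hmid]; rfl
      rw [Function.iterate_succ] at this
      exact this
    have hright : ∀ v, p (pinv v) = v := by
      intro v
      have : p^[m' + 1] v = v := by rw [hmid]; rfl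
      rw [Function.iterate_succ'] at this
      exact this
    have hpaut : IsAut Q p :=
      ⟨hpbij, hphom, pinv, hleft, hright, isHom_iterate hphom m'⟩
    -- pinv maps F to F
    have hpinvmem : ∀ x : ↥F, pinv (x : V) ∈ F := by
      intro x
      rw [hpinv_def, hiter m' x]
      exact (pF^[m'] x).2
    set gF : ↥F → ↥F := pF with hgF_def
    set gFinv : ↥F → ↥F := fun x => ⟨pinv (x : V), hpinvmem x⟩ with hgFinv_def
    have hginv_left : ∀ x : ↥F, gFinv (gF x) = x := by
      intro x
      apply Subtype.ext
      simp only [hgFinv_def, hgF_def, hpF_def]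
      exact hleft (x : V)
    have hginv_right : ∀ x : ↥F, gF (gFinv x) = x := by
      intro x
      apply Subtype.ext
      simp only [hgF_def, hgFinv_def, hpF_def]
      exact hright (x : V)
    refine ⟨h ∘ gFinv, ?_, gF, ⟨p, hpaut, fun x => rfl⟩, ?_⟩
    · refine ⟨fun x => hD _, fun x => ?_, h' ∘ pinv, fun v => hD' _,
        isHom_comp (isHom_iterate hphom m') hhom', fun x => ?_⟩
      · -- ((h ∘ gFinv) x).1 = x
        show (h (gFinv x)).1 = (x : V)
        rw [← hpF (gFinv x)]
        exact hright (x : V)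
      · -- (h' ∘ pinv) x = (h ∘ gFinv) x
        exact hext (gFinv x)
    · funext x
      simp only [Function.comp_apply, hginv_left x]
  · rintro ⟨f, ⟨hfD, hfid, f', hf'D, hf'hom, hf'ext⟩, g, ⟨g', ⟨hg'bij, hg'hom, _⟩, hg'ext⟩,
      rfl⟩
    have hgmem : ∀ x : ↥F, g' (x : V) ∈ F := fun x => by rw [hg'ext x]; exact (g x).2
    have hginj : Function.Injective g := by
      intro a b hab
      apply Subtype.ext
      apply hg'bij.1
      rw [hg'ext a, hg'ext b, hab]
    have hgsurj : Function.Surjective g := Finite.injective_iff_surjective.mp hginj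
    refine ⟨fun x => hfD _, ?_, f' ∘ g', fun v => hf'D _,
      isHom_comp hg'hom hf'hom, fun x => ?_⟩
    · ext y
      constructor
      · rintro ⟨x, rfl⟩
        simp only [Function.comp_apply, hfid (g x)]
        exact (g x).2
      · intro hy
        obtain ⟨x, hx⟩ := hgsurj ⟨y, hy⟩
        refine ⟨x, ?_⟩
        show (f (g x)).1 = y
        rw [hx]
        exact hfid ⟨y, hy⟩
    · have h1 : g' (x : V) = ((g x : ↥F) : V) := hg'ext x
      simp only [Function.comp_apply, h1, hf'ext (g x)]
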